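/- arXiv:1207.6404 — 2 statements merged into one kernel-verified Lean document; each statement's English description precedes it below -/
import Mathlib

section
/- For any map of finite groupoids f : E → B, the cardinality of E equals Σ over isomorphism classes b of B of |E_b| / |Aut(b)|, where E_b is the homotopy fibre (or full essential preimage) of f over b. -/
open CategoryTheory

noncomputable section

/-- Groupoid cardinality: `|X| = Σ_{x ∈ π₀X} 1/|Aut x|`. -/
def gcard (C : Type*) [Category C] : ℚ :=
  ∑ᶠ q : Quotient (isIsomorphicSetoid C), ((Nat.card (Aut (Quotient.out q)) : ℚ))⁻¹

set_option linter.unnecessarySimpa false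

namespace Stmt6Aux

lemma finite_hom {C : Type*} [Groupoid C] (x y : C) [Finite (Aut y)] : Finite (x ⟶ y) := by
  haveI : Finite (y ≅ y) := ‹Finite (Aut y)›
  rcases isEmpty_or_nonempty (x ⟶ y) with h | ⟨⟨f⟩⟩
  · infer_instance
  · exact Finite.of_injective (fun g => (Groupoid.isoEquivHom y y).symm (Groupoid.inv f ≫ g))
      (fun g g' h => by
        have := (Groupoid.isoEquivHom y y).symm.injective h
        simpa using congrArg (fun t => f ≫ t) this)

lemma card_hom_eq {C : Type*} [Groupoid C] {x y : C} (f : x ⟶ y) :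
    Nat.card (x ⟶ y) = Nat.card (Aut y) := by
  refine Nat.card_congr (Equiv.trans ⟨fun g => Groupoid.inv f ≫ g, fun h => f ≫ h, ?_, ?_⟩
    (Groupoid.isoEquivHom y y).symm)
  · intro g; simp
  · intro h; simp

lemma card_aut_congr {C : Type*} [Category C] {x y : C} (h : x ≅ y) :
    Nat.card (Aut x) = Nat.card (Aut y) := Nat.card_congr (Aut.autMulEquivOfIso h).toEquiv

lemma mk_eq_mk_iff {C : Type*} [Category C] {x y : C} :
    Quotient.mk (isIsomorphicSetoid C) x = Quotient.mk (isIsomorphicSetoid C) y ↔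
      Nonempty (x ≅ y) := by
  rw [Quotient.eq]; rfl


variable {E B : Type*} [Groupoid E] [Groupoid B] (F : E ⥤ B) (b : B)

/-- an iso in the homotopy fibre from an iso datum on left components -/
def isoOfLeft {x y : CostructuredArrow F b} (g : x.left ⟶ y.left)
    (w : F.map g ≫ y.hom = x.hom) : x ≅ y where
  hom := CostructuredArrow.homMk g w
  inv := CostructuredArrow.homMk (Groupoid.inv g)
    (by rw [← w, ← Category.assoc, ← F.map_comp, Groupoid.inv_comp, F.map_id, Category.id_comp])
  hom_inv_id := by apply CostructuredArrow.hom_ext; simp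
  inv_hom_id := by apply CostructuredArrow.hom_ext; simp

/-- the left-component iso of an iso in the fibre -/
def isoLeft {x y : CostructuredArrow F b} (α : x ≅ y) : x.left ≅ y.left where
  hom := α.hom.left
  inv := α.inv.left
  hom_inv_id := by simp [← Comma.comp_left]
  inv_hom_id := by simp [← Comma.comp_left]

lemma finite_aut_fib [∀ e : E, Finite (Aut e)] (x : CostructuredArrow F b) :
    Finite (Aut x) := by
  haveI : Finite (x.left ⟶ x.left) := finite_hom x.left x.left
  exact Finite.of_injective (fun u : Aut x => u.hom.left)
    (fun u v h => Iso.ext (CostructuredArrow.hom_ext _ _ h))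

lemma finite_pi0_fib [Finite (Quotient (isIsomorphicSetoid E))] [∀ e : E, Finite (Aut e)]
    [∀ b' : B, Finite (Aut b')] :
    Finite (Quotient (isIsomorphicSetoid (CostructuredArrow F b))) := by
  haveI : ∀ q : Quotient (isIsomorphicSetoid E), Finite (F.obj (Quotient.out q) ⟶ b) :=
    fun q => finite_hom _ _
  refine Finite.of_surjective
    (f := fun p : Σ q : Quotient (isIsomorphicSetoid E), (F.obj (Quotient.out q) ⟶ b) =>
      Quotient.mk (isIsomorphicSetoid (CostructuredArrow F b)) (CostructuredArrow.mk p.2)) ?_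
  intro c
  obtain ⟨x, rfl⟩ := Quotient.exists_rep c
  obtain ⟨σ⟩ : Nonempty ((Quotient.mk (isIsomorphicSetoid E) x.left).out ≅ x.left) :=
    Quotient.mk_out (s := isIsomorphicSetoid E) x.left
  refine ⟨⟨Quotient.mk _ x.left, F.map σ.hom ≫ x.hom⟩, Quotient.sound ?_⟩
  exact ⟨(isoOfLeft F b (x := CostructuredArrow.mk (F.map σ.hom ≫ x.hom))
    (y := CostructuredArrow.mk x.hom) σ.hom rfl).trans x.eta.symm⟩

instance fibAction (e : E) : MulAction (Aut e) (F.obj e ⟶ b) where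
  smul u φ := F.map u.inv ≫ φ
  one_smul φ := by
    show F.map (Iso.refl e).inv ≫ φ = φ
    simp
  mul_smul u v φ := by
    show F.map (u * v).inv ≫ φ = F.map u.inv ≫ F.map v.inv ≫ φ
    rw [Aut.Aut_mul_def]
    exact (congrArg (· ≫ φ) (F.map_comp u.inv v.inv)).trans (Category.assoc _ _ _)

lemma smul_def (e : E) (u : Aut e) (φ : F.obj e ⟶ b) : u • φ = F.map u.inv ≫ φ := rfl


lemma mk_mk_eq_iff_orbit (e : E) (φ ψ : F.obj e ⟶ b) :
    Quotient.mk (isIsomorphicSetoid (CostructuredArrow F b)) (CostructuredArrow.mk φ) =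
      Quotient.mk (isIsomorphicSetoid (CostructuredArrow F b)) (CostructuredArrow.mk ψ) ↔
    φ ∈ MulAction.orbit (Aut e) ψ := by
  rw [mk_eq_mk_iff, MulAction.mem_orbit_iff]
  constructor
  · rintro ⟨α⟩
    refine ⟨⟨α.inv.left, α.hom.left, ?_, ?_⟩, ?_⟩
    · simpa [← Comma.comp_left] using congrArg CommaMorphism.left α.inv_hom_id
    · simpa [← Comma.comp_left] using congrArg CommaMorphism.left α.hom_inv_id
    · show F.map α.hom.left ≫ ψ = φ
      exact CostructuredArrow.w α.hom
  · rintro ⟨u, hu⟩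
    have hu' : F.map u.inv ≫ ψ = φ := hu
    exact ⟨isoOfLeft F b (x := CostructuredArrow.mk φ) (y := CostructuredArrow.mk ψ) u.inv hu'⟩

/-- `Aut` in the fibre is the stabilizer -/
def autEquivStabilizer (e : E) (ψ : F.obj e ⟶ b) :
    Aut (CostructuredArrow.mk (S := F) (T := b) ψ) ≃ MulAction.stabilizer (Aut e) ψ where
  toFun α := ⟨⟨α.hom.left, α.inv.left,
      by simpa [← Comma.comp_left] using congrArg CommaMorphism.left α.hom_inv_id,
      by simpa [← Comma.comp_left] using congrArg CommaMorphism.left α.inv_hom_id⟩,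
    show F.map α.inv.left ≫ ψ = ψ from CostructuredArrow.w α.inv⟩
  invFun u := isoOfLeft F b (x := CostructuredArrow.mk ψ) (y := CostructuredArrow.mk ψ) u.1.hom
    (by
      have h : F.map u.1.inv ≫ ψ = ψ := u.2
      calc F.map u.1.hom ≫ ψ = F.map u.1.hom ≫ F.map u.1.inv ≫ ψ := by rw [h]
        _ = ψ := by
          rw [← Category.assoc, ← F.map_comp]
          exact (congrArg (fun t => F.map t ≫ ψ) (Iso.hom_inv_id (u.1 : e ≅ e))).trans
            (by rw [F.map_id, Category.id_comp]))
  left_inv α := Iso.ext (CostructuredArrow.hom_ext _ _ (by simp [isoOfLeft]))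
  right_inv u := Subtype.ext (Iso.ext (by simp [isoOfLeft]))

lemma stab_card (e : E) [Finite (Aut e)] (ψ : F.obj e ⟶ b)
    [∀ b' : B, Finite (Aut b')] :
    Nat.card {φ : F.obj e ⟶ b //
        Quotient.mk (isIsomorphicSetoid (CostructuredArrow F b)) (CostructuredArrow.mk φ) =
          Quotient.mk (isIsomorphicSetoid (CostructuredArrow F b)) (CostructuredArrow.mk ψ)} *
      Nat.card (Aut (CostructuredArrow.mk (S := F) (T := b) ψ)) = Nat.card (Aut e) := by
  have e1 : {φ : F.obj e ⟶ b //
      Quotient.mk (isIsomorphicSetoid (CostructuredArrow F b)) (CostructuredArrow.mk φ) =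
        Quotient.mk (isIsomorphicSetoid (CostructuredArrow F b)) (CostructuredArrow.mk ψ)} ≃
      MulAction.orbit (Aut e) ψ :=
    Equiv.subtypeEquivRight (fun φ => mk_mk_eq_iff_orbit F b e φ ψ)
  rw [Nat.card_congr e1, Nat.card_congr (autEquivStabilizer F b e ψ),
    ← Nat.card_prod, Nat.card_congr (MulAction.orbitProdStabilizerEquivGroup (Aut e) ψ)]


lemma gcard_fib [Finite (Quotient (isIsomorphicSetoid E))] [∀ e : E, Finite (Aut e)]
    [∀ b' : B, Finite (Aut b')] :
    gcard (CostructuredArrow F b) = ∑ᶠ q : Quotient (isIsomorphicSetoid E),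
      (Nat.card (F.obj (Quotient.out q) ⟶ b) : ℚ) / (Nat.card (Aut (Quotient.out q)) : ℚ) := by
  classical
  haveI := finite_pi0_fib F b
  letI : Fintype (Quotient (isIsomorphicSetoid (CostructuredArrow F b))) := Fintype.ofFinite _
  letI : Fintype (Quotient (isIsomorphicSetoid E)) := Fintype.ofFinite _
  rw [gcard, finsum_eq_sum_of_fintype, finsum_eq_sum_of_fintype]
  set p : Quotient (isIsomorphicSetoid (CostructuredArrow F b)) →
      Quotient (isIsomorphicSetoid E) :=
    Quotient.lift (fun x => Quotient.mk _ x.left)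
      (fun x y h => Quotient.sound (h.elim fun α => ⟨isoLeft F b α⟩)) with hp
  rw [← Finset.sum_fiberwise Finset.univ p
    (fun c => ((Nat.card (Aut (Quotient.out c)) : ℚ))⁻¹)]
  refine Finset.sum_congr rfl fun q _ => ?_
  set e := Quotient.out q with he
  set m : (F.obj e ⟶ b) → Quotient (isIsomorphicSetoid (CostructuredArrow F b)) :=
    fun φ => Quotient.mk _ (CostructuredArrow.mk φ) with hm
  haveI : Finite (F.obj e ⟶ b) := finite_hom _ _
  letI : Fintype (F.obj e ⟶ b) := Fintype.ofFinite _
  have hpm : ∀ φ, p (m φ) = q := fun φ => by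
    simp only [p, m, Quotient.lift_mk, CostructuredArrow.mk_left]
    exact Quotient.out_eq q
  have surj : ∀ c, p c = q → ∃ ψ, m ψ = c := by
    intro c hc
    obtain ⟨x, rfl⟩ := Quotient.exists_rep c
    have hx : Quotient.mk (isIsomorphicSetoid E) x.left = Quotient.mk (isIsomorphicSetoid E) e := by
      have h1 : p (Quotient.mk (isIsomorphicSetoid (CostructuredArrow F b)) x) =
          Quotient.mk (isIsomorphicSetoid E) x.left := rfl
      rw [← h1, hc, he, Quotient.out_eq]
    obtain ⟨σ⟩ := mk_eq_mk_iff.mp hx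
    refine ⟨F.map σ.inv ≫ x.hom, Quotient.sound ?_⟩
    exact ⟨(isoOfLeft F b (x := CostructuredArrow.mk (F.map σ.inv ≫ x.hom))
      (y := CostructuredArrow.mk x.hom) σ.inv rfl).trans x.eta.symm⟩
  have key : ∀ c, p c = q → ((Nat.card (Aut (Quotient.out c)) : ℚ))⁻¹ =
      (Nat.card {φ : F.obj e ⟶ b // m φ = c} : ℚ) / (Nat.card (Aut e) : ℚ) := by
    intro c hc
    obtain ⟨ψ, rfl⟩ := surj c hc
    haveI : Finite (Aut (CostructuredArrow.mk (S := F) (T := b) ψ)) := finite_aut_fib F b _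
    obtain ⟨τ⟩ : Nonempty ((Quotient.out (m ψ)) ≅ CostructuredArrow.mk (S := F) (T := b) ψ) :=
      Quotient.mk_out (s := isIsomorphicSetoid (CostructuredArrow F b)) (CostructuredArrow.mk ψ)
    rw [card_aut_congr τ]
    have hs : (0:ℚ) < Nat.card (Aut (CostructuredArrow.mk (S := F) (T := b) ψ)) := by
      exact_mod_cast Nat.card_pos
    have hg : (0:ℚ) < Nat.card (Aut e) := by exact_mod_cast Nat.card_pos
    rw [eq_div_iff hg.ne']
    have h2 : ((Nat.card {φ : F.obj e ⟶ b // m φ = m ψ} : ℚ)) *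
        (Nat.card (Aut (CostructuredArrow.mk (S := F) (T := b) ψ)) : ℚ) =
        (Nat.card (Aut e) : ℚ) := by exact_mod_cast stab_card F b e ψ
    rw [← h2, mul_comm ((Nat.card {φ : F.obj e ⟶ b // m φ = m ψ} : ℚ)) _, ← mul_assoc,
      inv_mul_cancel₀ hs.ne', one_mul]
  calc ∑ c ∈ Finset.filter (fun c => p c = q) Finset.univ,
        ((Nat.card (Aut (Quotient.out c)) : ℚ))⁻¹
      = ∑ c ∈ Finset.filter (fun c => p c = q) Finset.univ,
        (Nat.card {φ : F.obj e ⟶ b // m φ = c} : ℚ) / (Nat.card (Aut e) : ℚ) :=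
        Finset.sum_congr rfl fun c hc => key c (by simpa using hc)
    _ = (∑ c ∈ Finset.filter (fun c => p c = q) Finset.univ,
        (Nat.card {φ : F.obj e ⟶ b // m φ = c} : ℚ)) / (Nat.card (Aut e) : ℚ) := by
        rw [Finset.sum_div]
    _ = (∑ c : Quotient (isIsomorphicSetoid (CostructuredArrow F b)),
        (Nat.card {φ : F.obj e ⟶ b // m φ = c} : ℚ)) / (Nat.card (Aut e) : ℚ) := by
        congr 1
        apply Finset.sum_subset (Finset.filter_subset _ _)
        intro c _ hc
        haveI : IsEmpty {φ : F.obj e ⟶ b // m φ = c} :=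
          ⟨fun ⟨φ, hφ⟩ => (by simpa using hc : ¬ p c = q) (hφ ▸ hpm φ)⟩
        simp [Nat.card_of_isEmpty]
    _ = (Nat.card (F.obj e ⟶ b) : ℚ) / (Nat.card (Aut e) : ℚ) := by
        congr 1
        rw [← Nat.cast_sum]
        congr 1
        simp only [Nat.card_eq_fintype_card]
        rw [← Fintype.card_sigma]
        exact Fintype.card_congr (Equiv.sigmaFiberEquiv m)

end Stmt6Aux

/-- For a map `F : E → B` of finite groupoids, the cardinality of the total groupoid `E`
is the sum over isomorphism classes `b` of `B` of `|E_b| / |Aut b|`, where `E_b` is the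
homotopy fibre of `F` over `b` (objects: pairs `(e, φ : F e ⟶ b)`). -/
theorem stmt6 {E B : Type*} [Groupoid E] [Groupoid B] (F : E ⥤ B)
    [Finite (Quotient (isIsomorphicSetoid E))] [∀ e : E, Finite (Aut e)]
    [Finite (Quotient (isIsomorphicSetoid B))] [∀ b : B, Finite (Aut b)] :
    gcard E = ∑ᶠ q : Quotient (isIsomorphicSetoid B),
      gcard (CostructuredArrow F (Quotient.out q)) / (Nat.card (Aut (Quotient.out q)) : ℚ) := by
  classical
  letI : Fintype (Quotient (isIsomorphicSetoid E)) := Fintype.ofFinite _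
  letI : Fintype (Quotient (isIsomorphicSetoid B)) := Fintype.ofFinite _
  rw [finsum_eq_sum_of_fintype]
  have hterm : ∀ qb : Quotient (isIsomorphicSetoid B),
      gcard (CostructuredArrow F (Quotient.out qb)) / (Nat.card (Aut (Quotient.out qb)) : ℚ) =
      ∑ qe : Quotient (isIsomorphicSetoid E),
        (Nat.card (F.obj (Quotient.out qe) ⟶ Quotient.out qb) : ℚ) /
          ((Nat.card (Aut (Quotient.out qe)) : ℚ) * (Nat.card (Aut (Quotient.out qb)) : ℚ)) := by
    intro qb
    rw [Stmt6Aux.gcard_fib F (Quotient.out qb), finsum_eq_sum_of_fintype, Finset.sum_div]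
    exact Finset.sum_congr rfl fun qe _ => div_div _ _ _
  rw [Finset.sum_congr rfl fun qb _ => hterm qb, Finset.sum_comm]
  rw [gcard, finsum_eq_sum_of_fintype]
  refine Finset.sum_congr rfl fun qe _ => ?_
  set e := Quotient.out qe with he
  have hg : ((Nat.card (Aut e) : ℚ)) ≠ 0 := by
    have : (0:ℚ) < Nat.card (Aut e) := by exact_mod_cast Nat.card_pos
    exact this.ne'
  have hsum : ∀ qb : Quotient (isIsomorphicSetoid B),
      (Nat.card (F.obj e ⟶ Quotient.out qb) : ℚ) /
        ((Nat.card (Aut e) : ℚ) * (Nat.card (Aut (Quotient.out qb)) : ℚ)) =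
      if qb = Quotient.mk (isIsomorphicSetoid B) (F.obj e) then ((Nat.card (Aut e) : ℚ))⁻¹
      else 0 := by
    intro qb
    by_cases h : qb = Quotient.mk (isIsomorphicSetoid B) (F.obj e)
    · subst h
      obtain ⟨τ⟩ : Nonempty ((Quotient.mk (isIsomorphicSetoid B) (F.obj e)).out ≅ F.obj e) :=
        Quotient.mk_out (s := isIsomorphicSetoid B) (F.obj e)
      rw [if_pos rfl, Stmt6Aux.card_hom_eq (C := B) τ.inv]
      have ha : ((Nat.card (Aut ((Quotient.mk (isIsomorphicSetoid B) (F.obj e)).out)) : ℚ)) ≠ 0 := by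
        have : (0:ℚ) < Nat.card (Aut ((Quotient.mk (isIsomorphicSetoid B) (F.obj e)).out)) := by
          exact_mod_cast Nat.card_pos
        exact this.ne'
      field_simp
    · rw [if_neg h]
      haveI : IsEmpty (F.obj e ⟶ Quotient.out qb) := by
        rw [isEmpty_iff]
        intro f
        exact h (((Stmt6Aux.mk_eq_mk_iff.mpr ⟨(Groupoid.isoEquivHom _ _).symm f⟩).trans
          (Quotient.out_eq qb)).symm)
      simp [Nat.card_of_isEmpty]
  rw [Finset.sum_congr rfl fun qb _ => hsum qb]
  simp
end
end

section
/- For any action of a finite group G on a finite groupoid X, the cardinality of the homotopy quotient (action groupoid) X/G equals |X| / |G|. -/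
open CategoryTheory

noncomputable section

/-- For an action of a finite group `G` on a finite groupoid `X` (acting on objects by a
`MulAction` and on arrows by `smulHom`, functorially and compatibly with the group law),
the cardinality of the homotopy quotient (action groupoid) `X/G` — whose objects are those
of `X` and whose arrows `x → y` are pairs `(g, φ : g • x ⟶ y)` — equals `|X| / |G|`.
The homotopy quotient's cardinality is computed from its isomorphism classes
(the quotient of `X` by `x ≈ y ↔ ∃ g, (g • x ⟶ y)` nonempty) and its automorphism
groups (`Σ g : G, (g • x ⟶ x)`). -/
theorem stmt7 {G : Type*} [Group G] [Finite G] {X : Type*} [Groupoid X] [MulAction G X]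
    [Finite (Quotient (isIsomorphicSetoid X))] [∀ x : X, Finite (Aut x)]
    (smulHom : ∀ (g : G) {x y : X}, (x ⟶ y) → ((g • x) ⟶ (g • y)))
    (smul_id : ∀ (g : G) (x : X), smulHom g (𝟙 x) = 𝟙 (g • x))
    (smul_comp : ∀ (g : G) {x y z : X} (f : x ⟶ y) (h : y ⟶ z),
      smulHom g (f ≫ h) = smulHom g f ≫ smulHom g h)
    (smul_one : ∀ {x y : X} (f : x ⟶ y),
      smulHom (1 : G) f = eqToHom (one_smul G x) ≫ f ≫ eqToHom (one_smul G y).symm)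
    (smul_mul : ∀ (g h : G) {x y : X} (f : x ⟶ y),
      smulHom (g * h) f =
        eqToHom (mul_smul g h x) ≫ smulHom g (smulHom h f) ≫ eqToHom (mul_smul g h y).symm) :
    (∑ᶠ q : Quot (fun x y : X => ∃ g : G, Nonempty ((g • x) ⟶ y)),
        ((Nat.card (Σ g : G, ((g • (Quot.out q)) ⟶ (Quot.out q))) : ℚ))⁻¹) =
      gcard X / (Nat.card G : ℚ) := by
  classical
  set r : X → X → Prop := fun x y => ∃ g : G, Nonempty ((g • x) ⟶ y) with hr
  -- basic facts
  have endFin : ∀ x : X, Finite (x ⟶ x) := fun x =>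
    Finite.of_equiv (Aut x) (Groupoid.isoEquivHom x x)
  have homFin : ∀ x y : X, Finite (x ⟶ y) := by
    intro x y
    by_cases h : Nonempty (x ⟶ y)
    · obtain ⟨f⟩ := h
      haveI := endFin x
      exact Finite.of_injective (fun h => h ≫ Groupoid.inv f)
        (fun a b hab => by simpa using congrArg (fun z => z ≫ f) hab)
    · haveI : IsEmpty (x ⟶ y) := not_nonempty_iff.mp h
      infer_instance
  have card_hom_congr : ∀ {a b c d : X}, (a ⟶ c) → (b ⟶ d) →
      Nat.card (a ⟶ b) = Nat.card (c ⟶ d) := by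
    intro a b c d f g
    exact Nat.card_congr
      ⟨fun h => Groupoid.inv f ≫ h ≫ g, fun h => f ≫ h ≫ Groupoid.inv g,
       fun h => by simp, fun h => by simp⟩
  have key : ∀ (k : G) (hk : k = 1), ∀ {x y : X} (f : x ⟶ y),
      smulHom k f = eqToHom (by rw [hk]; exact one_smul G x) ≫ f ≫
        eqToHom (by rw [hk]; exact (one_smul G y).symm) := by
    rintro k rfl x y f
    exact smul_one f
  have smul_inj : ∀ (g : G) {x y : X} (a b : x ⟶ y),
      smulHom g a = smulHom g b → a = b := by
    intro g x y a b hab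
    have ha := smul_mul g⁻¹ g a
    have hb := smul_mul g⁻¹ g b
    rw [hab] at ha
    have h1 := key (g⁻¹ * g) (inv_mul_cancel g) a
    have h2 := key (g⁻¹ * g) (inv_mul_cancel g) b
    have h3 := h1.symm.trans (ha.trans (hb.symm.trans h2))
    rwa [cancel_epi, cancel_mono] at h3
  have card_smul : ∀ (g : G) (x y : X),
      Nat.card ((g • x) ⟶ (g • y)) = Nat.card (x ⟶ y) := by
    intro g x y
    haveI := homFin x y
    haveI := homFin (g • x) (g • y)
    haveI := homFin (g⁻¹ • (g • x)) (g⁻¹ • (g • y))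
    have h1 : Nat.card (x ⟶ y) ≤ Nat.card ((g • x) ⟶ (g • y)) :=
      Nat.card_le_card_of_injective _ (fun a b => smul_inj g a b)
    have h2 : Nat.card ((g • x) ⟶ (g • y)) ≤
        Nat.card ((g⁻¹ • (g • x)) ⟶ (g⁻¹ • (g • y))) :=
      Nat.card_le_card_of_injective _ (fun a b => smul_inj g⁻¹ a b)
    have h3 : Nat.card ((g⁻¹ • (g • x)) ⟶ (g⁻¹ • (g • y))) = Nat.card (x ⟶ y) := by
      rw [inv_smul_smul, inv_smul_smul]
    omega
  -- r is an equivalence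
  have rsymm_aux : ∀ {x y : X} (g : G), ((g • x) ⟶ y) → ((g⁻¹ • y) ⟶ x) := by
    intro x y g φ
    exact Groupoid.inv (eqToHom (inv_smul_smul g x).symm ≫ smulHom g⁻¹ φ)
  have requiv : Equivalence r := by
    constructor
    · intro x; exact ⟨1, ⟨eqToHom (one_smul G x)⟩⟩
    · rintro x y ⟨g, ⟨φ⟩⟩; exact ⟨g⁻¹, ⟨rsymm_aux g φ⟩⟩
    · rintro x y z ⟨g, ⟨φ⟩⟩ ⟨h, ⟨ψ⟩⟩
      exact ⟨h * g, ⟨eqToHom (mul_smul h g x) ≫ smulHom h φ ≫ ψ⟩⟩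
  have quotmk_eq : ∀ {a b : X}, Quot.mk r a = Quot.mk r b ↔ r a b := by
    intro a b
    rw [Quot.eq]
    exact requiv.eqvGen_iff
  -- the action on iso classes
  letI : SMul G (Quotient (isIsomorphicSetoid X)) :=
    ⟨fun g => Quotient.map (fun x => g • x)
      (fun a b hab => ⟨(Groupoid.isoEquivHom _ _).symm (smulHom g hab.some.hom)⟩)⟩
  letI : MulAction G (Quotient (isIsomorphicSetoid X)) :=
    { one_smul := fun c => Quotient.inductionOn c fun x => by
        show (⟦(1 : G) • x⟧ : Quotient (isIsomorphicSetoid X)) = ⟦x⟧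
        rw [one_smul]
      mul_smul := fun g h c => Quotient.inductionOn c fun x => by
        show (⟦(g * h) • x⟧ : Quotient (isIsomorphicSetoid X)) = ⟦g • (h • x)⟧
        rw [mul_smul] }
  have smul_mk : ∀ (g : G) (x : X),
      g • (⟦x⟧ : Quotient (isIsomorphicSetoid X)) = ⟦g • x⟧ := fun g x => rfl
  -- the projection from iso classes to X/G classes
  set pmap : Quotient (isIsomorphicSetoid X) → Quot r :=
    Quotient.lift (Quot.mk r)
      (fun a b hab => Quot.sound ⟨1, ⟨eqToHom (one_smul G a) ≫ hab.some.hom⟩⟩) with hpmap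
  have pmap_mk : ∀ x : X, pmap ⟦x⟧ = Quot.mk r x := fun x => rfl
  have pmap_surj : Function.Surjective pmap := fun q =>
    Quot.inductionOn q fun x => ⟨⟦x⟧, rfl⟩
  haveI : Finite (Quot r) := Finite.of_surjective pmap pmap_surj
  letI : Fintype (Quotient (isIsomorphicSetoid X)) := Fintype.ofFinite _
  letI : Fintype (Quot r) := Fintype.ofFinite _
  letI : Fintype G := Fintype.ofFinite _
  have hGpos : (0 : ℚ) < (Nat.card G : ℚ) := by
    exact_mod_cast Nat.card_pos
  rw [gcard, finsum_eq_sum_of_fintype, finsum_eq_sum_of_fintype, eq_div_iff hGpos.ne',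
    Finset.sum_mul, ← Finset.sum_fiberwise Finset.univ pmap
      (fun c => ((Nat.card (Aut (Quotient.out c)) : ℚ))⁻¹)]
  refine Finset.sum_congr rfl fun q _ => ?_
  set x₀ : X := Quot.out q with hx₀
  have hq : Quot.mk r x₀ = q := Quot.out_eq q
  -- each fiber element has the same automorphism count
  have fiber_iff : ∀ c : Quotient (isIsomorphicSetoid X),
      pmap c = q ↔ c ∈ MulAction.orbit G (⟦x₀⟧ : Quotient (isIsomorphicSetoid X)) := by
    intro c
    induction c using Quotient.inductionOn with
    | h y =>
      rw [pmap_mk, ← hq, quotmk_eq]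
      constructor
      · rintro ⟨g, ⟨φ⟩⟩
        exact ⟨g⁻¹, by
          show g⁻¹ • (⟦x₀⟧ : Quotient (isIsomorphicSetoid X)) = ⟦y⟧
          rw [smul_mk]
          exact Quotient.sound ⟨(Groupoid.isoEquivHom _ _).symm (rsymm_aux g φ)⟩⟩
      · rintro ⟨g, hg⟩
        have hg' : g • (⟦x₀⟧ : Quotient (isIsomorphicSetoid X)) = ⟦y⟧ := hg
        rw [smul_mk] at hg'
        obtain ⟨e⟩ := Quotient.exact hg'
        exact ⟨g⁻¹, ⟨rsymm_aux g (Groupoid.isoEquivHom _ _ e)⟩⟩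
  have aut_card : ∀ c : Quotient (isIsomorphicSetoid X), pmap c = q →
      Nat.card (Aut (Quotient.out c)) = Nat.card (Aut x₀) := by
    intro c hc
    have h1 : pmap ⟦Quotient.out c⟧ = q := by rw [Quotient.out_eq]; exact hc
    rw [pmap_mk, ← hq, quotmk_eq] at h1
    obtain ⟨g, ⟨φ⟩⟩ := h1
    set y := Quotient.out c
    have e1 : Nat.card (Aut y) = Nat.card (y ⟶ y) :=
      Nat.card_congr (Groupoid.isoEquivHom y y)
    have e2 : Nat.card ((g • y) ⟶ (g • y)) = Nat.card (x₀ ⟶ x₀) := card_hom_congr φ φ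
    have e3 : Nat.card (Aut x₀) = Nat.card (x₀ ⟶ x₀) :=
      Nat.card_congr (Groupoid.isoEquivHom x₀ x₀)
    rw [e1, e3, ← e2, card_smul]
  -- compute the sigma cardinality
  haveI : ∀ g : G, Fintype ((g • x₀) ⟶ x₀) := fun g => @Fintype.ofFinite _ (homFin _ _)
  have sigma_card : Nat.card (Σ g : G, ((g • x₀) ⟶ x₀)) =
      Nat.card (MulAction.stabilizer G (⟦x₀⟧ : Quotient (isIsomorphicSetoid X))) *
        Nat.card (Aut x₀) := by
    have stab_iff : ∀ g : G,
        g ∈ MulAction.stabilizer G (⟦x₀⟧ : Quotient (isIsomorphicSetoid X)) ↔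
          Nonempty ((g • x₀) ⟶ x₀) := by
      intro g
      rw [MulAction.mem_stabilizer_iff, smul_mk]
      constructor
      · intro h
        obtain ⟨e⟩ := Quotient.exact h
        exact ⟨Groupoid.isoEquivHom _ _ e⟩
      · rintro ⟨φ⟩
        exact Quotient.sound ⟨(Groupoid.isoEquivHom _ _).symm φ⟩
    rw [Nat.card_eq_fintype_card, Fintype.card_sigma]
    have e3 : Nat.card (Aut x₀) = Nat.card (x₀ ⟶ x₀) :=
      Nat.card_congr (Groupoid.isoEquivHom x₀ x₀)
    have term_eq : ∀ g : G, Fintype.card ((g • x₀) ⟶ x₀) =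
        if Nonempty ((g • x₀) ⟶ x₀) then Nat.card (Aut x₀) else 0 := by
      intro g
      by_cases hne : Nonempty ((g • x₀) ⟶ x₀)
      · obtain ⟨φ⟩ := hne
        rw [if_pos ⟨φ⟩, e3, ← Nat.card_eq_fintype_card]
        exact card_hom_congr φ (𝟙 x₀)
      · rw [if_neg hne, Fintype.card_eq_zero_iff.mpr (not_nonempty_iff.mp hne)]
    rw [Finset.sum_congr rfl fun g _ => term_eq g, ← Finset.sum_filter]
    simp only [Finset.sum_const, smul_eq_mul]
    congr 1
    rw [Nat.card_eq_fintype_card, ← Fintype.card_subtype]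
    exact Fintype.card_congr (Equiv.subtypeEquivRight fun g => (stab_iff g).symm)
  -- fiber cardinality via orbit
  have fiber_card : (Finset.univ.filter fun c => pmap c = q).card =
      Nat.card (MulAction.orbit G (⟦x₀⟧ : Quotient (isIsomorphicSetoid X))) := by
    rw [Nat.card_eq_fintype_card, ← Fintype.card_subtype]
    exact Fintype.card_congr (Equiv.subtypeEquivRight fun c => fiber_iff c)
  have orbit_stab :
      Nat.card (MulAction.orbit G (⟦x₀⟧ : Quotient (isIsomorphicSetoid X))) *
        Nat.card (MulAction.stabilizer G (⟦x₀⟧ : Quotient (isIsomorphicSetoid X))) =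
          Nat.card G := by
    rw [← Nat.card_prod]
    exact Nat.card_congr (MulAction.orbitProdStabilizerEquivGroup G _)
  -- put everything together
  rw [Finset.sum_congr rfl fun c hc => by
    rw [aut_card c (Finset.mem_filter.mp hc).2]]
  rw [Finset.sum_const, nsmul_eq_mul, fiber_card, sigma_card]
  set o := Nat.card (MulAction.orbit G (⟦x₀⟧ : Quotient (isIsomorphicSetoid X)))
  set s := Nat.card (MulAction.stabilizer G (⟦x₀⟧ : Quotient (isIsomorphicSetoid X)))
  set a := Nat.card (Aut x₀)
  have hs : 0 < s := Nat.card_pos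
  have ha : 0 < a := Nat.card_pos
  have hG : o * s = Nat.card G := orbit_stab
  rw [← hG]
  push_cast
  field_simp
end
end
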